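/- Let y_m > 0 and let f : ℝ → ℝ be continuous and strictly positive on [0, y_m]. Set F(y) = ∫₀^y f(s) ds and h(y) = F(y_m) − F(y). Then for every continuous σ : [0, y_m] → ℝ with σ(s) ≥ 0 for all s, such that s ↦ √((σ(s)+1)/h(s)) and s ↦ σ(s)√((σ(s)+1)/h(s)) are integrable on (0, y_m), one has 2·(∫₀^{y_m} (1 − 2σ(s))·√((σ(s)+1)/h(s)) ds) / (∫₀^{y_m} √((σ(s)+1)/h(s)) ds)³ ≤ 2·(∫₀^{y_m} h(s)^{-1/2} ds)^{-2}, with equality when σ ≡ 0. -/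

import Mathlib

open MeasureTheory intervalIntegral Set

lemma aux_sqrt_inv (x : ℝ) : Real.sqrt (1/x) = x ^ (-(1/2) : ℝ) := by
  rcases le_or_gt 0 x with hx | hx
  · rw [Real.rpow_neg hx, ← Real.sqrt_eq_rpow, one_div, Real.sqrt_inv]
  · rw [Real.sqrt_eq_zero_of_nonpos (one_div_nonpos.2 hx.le), Real.rpow_def_of_neg hx,
      show (-(1/2) * Real.pi : ℝ) = -(Real.pi/2) by ring, Real.cos_neg, Real.cos_pi_div_two,
      mul_zero]

lemma aux_alg (t : ℝ) (ht : 0 ≤ t) : (1 - 2*t) * Real.sqrt (t+1) ≤ 1 := by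
  have hs := Real.sq_sqrt (by linarith : (0:ℝ) ≤ t+1)
  have hn := Real.sqrt_nonneg (t+1)
  have hs1 : 1 ≤ Real.sqrt (t+1) := by nlinarith
  nlinarith [sq_nonneg (Real.sqrt (t+1) - 1), sq_nonneg (Real.sqrt (t+1) + 1)]

/-- Theorem 2 (dual variational principle): for every admissible `σ ≥ 0`,
`2 ∫₀^{y_m}(1−2σ)√((σ+1)/h) / (∫₀^{y_m} √((σ+1)/h))³ ≤ 1/λ`, with
`1/λ = 2(∫₀^{y_m} h^{-1/2})^{-2}`, and equality holds when `σ ≡ 0`. -/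
theorem stmt_9 (y_m : ℝ) (hym : 0 < y_m) (f : ℝ → ℝ)
    (hf_cont : ContinuousOn f (Set.Icc 0 y_m))
    (hf_pos : ∀ y ∈ Set.Icc 0 y_m, 0 < f y)
    (F h : ℝ → ℝ)
    (hF : ∀ y, F y = ∫ s in (0:ℝ)..y, f s)
    (hh : ∀ y, h y = F y_m - F y)
    (σ : ℝ → ℝ)
    (hσ_cont : ContinuousOn σ (Set.Icc 0 y_m))
    (hσ_nonneg : ∀ s ∈ Set.Icc 0 y_m, 0 ≤ σ s)
    (hint1 : IntervalIntegrable (fun s => Real.sqrt ((σ s + 1) / h s)) volume 0 y_m)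
    (hint2 : IntervalIntegrable (fun s => σ s * Real.sqrt ((σ s + 1) / h s)) volume 0 y_m) :
    2 * (∫ s in (0:ℝ)..y_m, (1 - 2 * σ s) * Real.sqrt ((σ s + 1) / h s))
        / (∫ s in (0:ℝ)..y_m, Real.sqrt ((σ s + 1) / h s)) ^ 3
      ≤ 2 * ((∫ s in (0:ℝ)..y_m, (h s) ^ (-(1/2) : ℝ)) ^ 2)⁻¹ ∧
    2 * (∫ s in (0:ℝ)..y_m, (1 - 2 * (0:ℝ)) * Real.sqrt (((0:ℝ) + 1) / h s))
        / (∫ s in (0:ℝ)..y_m, Real.sqrt (((0:ℝ) + 1) / h s)) ^ 3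
      = 2 * ((∫ s in (0:ℝ)..y_m, (h s) ^ (-(1/2) : ℝ)) ^ 2)⁻¹ := by
  -- basic facts about h
  have hf_int : ∀ x ∈ Icc (0:ℝ) y_m, IntervalIntegrable f volume x y_m := by
    intro x hx
    apply (hf_cont.mono ?_).intervalIntegrable
    rw [uIcc_of_le hx.2]
    exact Icc_subset_Icc hx.1 le_rfl
  have hf_int0 : ∀ x ∈ Icc (0:ℝ) y_m, IntervalIntegrable f volume 0 x := by
    intro x hx
    apply (hf_cont.mono ?_).intervalIntegrable
    rw [uIcc_of_le hx.1]
    exact Icc_subset_Icc le_rfl hx.2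
  have hF0 : IntervalIntegrable f volume 0 y_m := hf_int 0 ⟨le_rfl, hym.le⟩
  have hh_eq : ∀ x ∈ Icc (0:ℝ) y_m, h x = ∫ s in x..y_m, f s := by
    intro x hx
    rw [hh, hF, hF]
    exact integral_interval_sub_left hF0 (hf_int0 x hx)
  have hh_nonneg : ∀ x ∈ Icc (0:ℝ) y_m, 0 ≤ h x := by
    intro x hx
    rw [hh_eq x hx]
    apply intervalIntegral.integral_nonneg hx.2
    intro u hu; exact (hf_pos u ⟨hx.1.trans hu.1, hu.2⟩).le
  have hh_pos : ∀ x ∈ Ico (0:ℝ) y_m, 0 < h x := by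
    intro x hx
    rw [hh_eq x ⟨hx.1, hx.2.le⟩]
    apply intervalIntegral_pos_of_pos_on (hf_int x ⟨hx.1, hx.2.le⟩) ?_ hx.2
    intro u hu; exact hf_pos u ⟨hx.1.trans hu.1.le, hu.2.le⟩
  -- pointwise inequalities
  have ptA : ∀ x ∈ Icc (0:ℝ) y_m,
      (1 - 2*σ x) * Real.sqrt ((σ x + 1) / h x) ≤ h x ^ (-(1/2):ℝ) := by
    intro x hx
    have ht := hσ_nonneg x hx
    rw [← aux_sqrt_inv, div_eq_mul_one_div, Real.sqrt_mul (by linarith)]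
    calc (1 - 2*σ x) * (Real.sqrt (σ x + 1) * Real.sqrt (1 / h x))
        = ((1 - 2*σ x) * Real.sqrt (σ x + 1)) * Real.sqrt (1 / h x) := by ring
      _ ≤ 1 * Real.sqrt (1 / h x) :=
          mul_le_mul_of_nonneg_right (aux_alg (σ x) ht) (Real.sqrt_nonneg _)
      _ = Real.sqrt (1 / h x) := one_mul _
  have ptB : ∀ x ∈ Icc (0:ℝ) y_m,
      h x ^ (-(1/2):ℝ) ≤ Real.sqrt ((σ x + 1) / h x) := by
    intro x hx
    have ht := hσ_nonneg x hx
    rw [← aux_sqrt_inv]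
    apply Real.sqrt_le_sqrt
    exact div_le_div_of_nonneg_right (by linarith) (hh_nonneg x hx)
  -- measurability and integrability of h^{-1/2}
  have hFcont : ContinuousOn F (Icc 0 y_m) := by
    have : IntegrableOn f (uIcc 0 y_m) volume := by
      rw [uIcc_of_le hym.le]; exact hf_cont.integrableOn_Icc
    have hc := intervalIntegral.continuousOn_primitive_interval (f := f) (a := 0) (b := y_m) this
    rw [uIcc_of_le hym.le] at hc
    exact hc.congr fun y hy => hF y
  have hhcont : ContinuousOn h (Icc 0 y_m) :=
    (continuousOn_const.sub hFcont).congr fun y hy => hh y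
  have hmeas : AEStronglyMeasurable (fun s => h s ^ (-(1/2):ℝ))
      (volume.restrict (uIoc 0 y_m)) := by
    rw [uIoc_of_le hym.le, ← Measure.restrict_congr_set Ioo_ae_eq_Ioc]
    apply ContinuousOn.aestronglyMeasurable ?_ measurableSet_Ioo
    apply (hhcont.mono Ioo_subset_Icc_self).rpow_const
    intro x hx
    exact Or.inl (hh_pos x ⟨hx.1.le, hx.2⟩).ne'
  have hintI : IntervalIntegrable (fun s => h s ^ (-(1/2):ℝ)) volume 0 y_m := by
    apply hint1.mono_fun hmeas
    filter_upwards [ae_restrict_mem measurableSet_uIoc] with x hx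
    rw [uIoc_of_le hym.le] at hx
    have hxm : x ∈ Icc (0:ℝ) y_m := ⟨hx.1.le, hx.2⟩
    rw [Real.norm_eq_abs, Real.norm_eq_abs,
      abs_of_nonneg (Real.rpow_nonneg (hh_nonneg x hxm) _),
      abs_of_nonneg (Real.sqrt_nonneg _)]
    exact ptB x hxm
  have hintN : IntervalIntegrable
      (fun s => (1 - 2 * σ s) * Real.sqrt ((σ s + 1) / h s)) volume 0 y_m := by
    have heq : (fun s => (1 - 2 * σ s) * Real.sqrt ((σ s + 1) / h s))
        = fun s => Real.sqrt ((σ s + 1) / h s)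
            - 2 * (σ s * Real.sqrt ((σ s + 1) / h s)) := by
      funext s; ring
    rw [heq]
    exact hint1.sub (hint2.const_mul 2)
  -- integral comparisons
  set N := ∫ s in (0:ℝ)..y_m, (1 - 2 * σ s) * Real.sqrt ((σ s + 1) / h s) with hN
  set A := ∫ s in (0:ℝ)..y_m, Real.sqrt ((σ s + 1) / h s) with hA
  set I := ∫ s in (0:ℝ)..y_m, (h s) ^ (-(1/2):ℝ) with hI
  have hNI : N ≤ I := integral_mono_on hym.le hintN hintI ptA
  have hIA : I ≤ A := integral_mono_on hym.le hintI hint1 ptB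
  have hIpos : 0 < I := by
    apply intervalIntegral_pos_of_pos_on hintI ?_ hym
    intro x hx
    exact Real.rpow_pos_of_pos (hh_pos x ⟨hx.1.le, hx.2⟩) _
  have hkey : ∀ J : ℝ, J ≠ 0 → 2 * J / J ^ 3 = 2 * (J ^ 2)⁻¹ := by
    intro J hJ; field_simp
  constructor
  · have hdiv : N / A ^ 3 ≤ I / I ^ 3 :=
      div_le_div₀ hIpos.le hNI (pow_pos hIpos 3) (pow_le_pow_left₀ hIpos.le hIA 3)
    calc 2 * N / A ^ 3 = 2 * (N / A ^ 3) := by ring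
      _ ≤ 2 * (I / I ^ 3) := by linarith
      _ = 2 * I / I ^ 3 := by ring
      _ = 2 * (I ^ 2)⁻¹ := hkey I hIpos.ne'
  · simp only [mul_zero, sub_zero, zero_add, one_mul, aux_sqrt_inv]
    exact hkey I hIpos.ne'
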